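/- arXiv:1203.5809 — 8 statements merged into one kernel-verified Lean document; each statement's English description precedes it below -/
import Mathlib

section
/- Let ρ ∈ ℝ, let (Ω, F, P) be a probability space, let (E, ℰ) be a measurable space, let (t_n)_{n≥0} be a non-decreasing real sequence, let ζ : [0,∞) → (0,∞] be a function, let V : E → [0,∞) be measurable, and let Y : ℕ₀ × Ω → E and Z : ℕ × Ω → ℝ be stochastic processes such that E[1_{Ω_n}|Z_n|] < ∞ and 1_{Ω_n} V(Y_n) ≤ e^{ρ(t_n - t_{n-1})} V(Y_{n-1}) + 1_{Ω_n} Z_n for all n ≥ 1, where Ω_n := ⋂_{k=0}^{n-1} {V(Y_k) ≤ ζ(t_{k+1} - t_k)}. Then for all n ≥ 0: 1_{Ω_n} V(Y_n) ≤ e^{ρ(t_n - t_0)} V(Y_0) + Σ_{k=1}^{n} e^{ρ(t_n - t_k)} 1_{Ω_k} Z_k. -/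
open MeasureTheory ENNReal

/-- The event that `V(Y_k) ≤ ζ(t_{k+1} - t_k)` holds for all `k ∈ {0, …, n-1}`
(for `n = 0` this is the whole space). -/
def rareEvent {Ω E : Type*} (V : E → ℝ) (Y : ℕ → Ω → E) (ζ : ℝ → ℝ≥0∞)
    (t : ℕ → ℝ) (n : ℕ) : Set Ω :=
  ⋂ k ∈ Finset.range n, {ω | ENNReal.ofReal (V (Y k ω)) ≤ ζ (t (k + 1) - t k)}

/-- Pathwise Lyapunov-type estimate on complements of rare events. -/
theorem stmt0 {Ω E : Type*} [MeasurableSpace Ω] [MeasurableSpace E]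
    (P : Measure Ω) [IsProbabilityMeasure P]
    (ρ : ℝ) (t : ℕ → ℝ) (ht : Monotone t)
    (ζ : ℝ → ℝ≥0∞) (hζ : ∀ s, 0 < ζ s)
    (V : E → ℝ) (hV : Measurable V) (hVnn : ∀ e, 0 ≤ V e)
    (Y : ℕ → Ω → E) (hY : ∀ n, Measurable (Y n))
    (Z : ℕ → Ω → ℝ) (hZ : ∀ n, Measurable (Z n))
    (hZint : ∀ n, 1 ≤ n →
      Integrable
        (fun ω => Set.indicator (rareEvent V Y ζ t n) (fun _ => (1 : ℝ)) ω * |Z n ω|) P)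
    (hLyap : ∀ n ω,
      Set.indicator (rareEvent V Y ζ t (n + 1)) (fun _ => (1 : ℝ)) ω * V (Y (n + 1) ω)
        ≤ Real.exp (ρ * (t (n + 1) - t n)) * V (Y n ω)
          + Set.indicator (rareEvent V Y ζ t (n + 1)) (fun _ => (1 : ℝ)) ω * Z (n + 1) ω) :
    ∀ n ω,
      Set.indicator (rareEvent V Y ζ t n) (fun _ => (1 : ℝ)) ω * V (Y n ω)
        ≤ Real.exp (ρ * (t n - t 0)) * V (Y 0 ω)
          + ∑ k ∈ Finset.Icc 1 n,
              Real.exp (ρ * (t n - t k))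
                * (Set.indicator (rareEvent V Y ζ t k) (fun _ => (1 : ℝ)) ω * Z k ω) := by

  intro n
  induction n with
  | zero =>
    intro ω
    simp [rareEvent]
  | succ n ih =>
    intro ω
    set I : ℕ → ℝ := fun m => Set.indicator (rareEvent V Y ζ t m) (fun _ => (1 : ℝ)) ω with hI
    have hIle : I (n + 1) ≤ I n := by
      apply Set.indicator_le_indicator_of_subset
      · intro x hx
        simp only [rareEvent, Finset.mem_range, Set.mem_iInter] at hx ⊢
        intro k hk
        exact hx k (Nat.lt_succ_of_lt hk)
      · intro _; exact zero_le_one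
    have hInn : 0 ≤ I (n + 1) := Set.indicator_nonneg (fun _ _ => zero_le_one) ω
    have hIid : I (n + 1) * I (n + 1) = I (n + 1) := by
      by_cases h : ω ∈ rareEvent V Y ζ t (n + 1) <;> simp [hI, Set.indicator, h]
    have step : I (n + 1) * V (Y (n + 1) ω)
        ≤ Real.exp (ρ * (t (n + 1) - t n)) * (I n * V (Y n ω)) + I (n + 1) * Z (n + 1) ω := by
      calc I (n + 1) * V (Y (n + 1) ω)
          = I (n + 1) * (I (n + 1) * V (Y (n + 1) ω)) := by rw [← mul_assoc, hIid]
        _ ≤ I (n + 1) * (Real.exp (ρ * (t (n + 1) - t n)) * V (Y n ω)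
              + I (n + 1) * Z (n + 1) ω) := mul_le_mul_of_nonneg_left (hLyap n ω) hInn
        _ = Real.exp (ρ * (t (n + 1) - t n)) * (I (n + 1) * V (Y n ω))
              + (I (n + 1) * I (n + 1)) * Z (n + 1) ω := by ring
        _ ≤ Real.exp (ρ * (t (n + 1) - t n)) * (I n * V (Y n ω))
              + I (n + 1) * Z (n + 1) ω := by
            rw [hIid]
            exact add_le_add_left (mul_le_mul_of_nonneg_left
              (mul_le_mul_of_nonneg_right hIle (hVnn _)) (Real.exp_pos _).le) _
    have main := step.trans (add_le_add_left
      (mul_le_mul_of_nonneg_left (ih ω) (Real.exp_pos _).le) _)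
    refine main.trans_eq ?_
    rw [Finset.sum_Icc_succ_top (by omega : 1 ≤ n + 1), mul_add, Finset.mul_sum]
    have hexp : ∀ a b : ℝ, Real.exp (ρ * (t (n + 1) - t n)) * Real.exp (ρ * (t n - a)) * b
        = Real.exp (ρ * (t (n + 1) - a)) * b := by
      intro a b
      rw [← Real.exp_add]
      ring_nf
    have h0 := hexp (t 0) (V (Y 0 ω))
    rw [← mul_assoc, h0]
    have hsum : ∑ k ∈ Finset.Icc 1 n, Real.exp (ρ * (t (n + 1) - t n)) *
          (Real.exp (ρ * (t n - t k)) * (I k * Z k ω))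
        = ∑ k ∈ Finset.Icc 1 n, Real.exp (ρ * (t (n + 1) - t k)) * (I k * Z k ω) := by
      refine Finset.sum_congr rfl fun k _ => ?_
      rw [← mul_assoc, hexp]
    rw [hsum]
    simp [sub_self, Real.exp_zero, add_assoc]
    rfl
end

section
/- Under the assumptions of the rare-event Lyapunov estimate (1_{Ω_n} V(Y_n) ≤ e^{ρ(t_n - t_{n-1})} V(Y_{n-1}) + 1_{Ω_n} Z_n with E[1_{Ω_n}|Z_n|] < ∞ for all n ≥ 1), the probability of the complement of Ω_n satisfies P[(Ω_n)^c] ≤ Σ_{k=0}^{n-1} ( e^{ρ(t_k - t_0)} E[V(Y_0)] + Σ_{l=1}^{k} e^{ρ(t_k - t_l)} E[1_{Ω_l} Z_l] ) / ζ(t_{k+1} - t_k) for all n ≥ 0. -/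
open MeasureTheory ENNReal

/-- Probability bound for the complement of the rare events
(with the convention `a / ∞ = 0`, realized here via `(ζ s).toReal = 0` for `ζ s = ∞`
and `a / 0 = 0` in `ℝ`). -/
theorem stmt1 {Ω E : Type*} [MeasurableSpace Ω] [MeasurableSpace E]
    (P : Measure Ω) [IsProbabilityMeasure P]
    (ρ : ℝ) (t : ℕ → ℝ) (ht : Monotone t)
    (ζ : ℝ → ℝ≥0∞) (hζ : ∀ s, 0 < ζ s)
    (V : E → ℝ) (hV : Measurable V) (hVnn : ∀ e, 0 ≤ V e)
    (Y : ℕ → Ω → E) (hY : ∀ n, Measurable (Y n))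
    (Z : ℕ → Ω → ℝ) (hZ : ∀ n, Measurable (Z n))
    (hint0 : Integrable (fun ω => V (Y 0 ω)) P)
    (hZint : ∀ n, 1 ≤ n →
      Integrable
        (fun ω => Set.indicator (rareEvent V Y ζ t n) (fun _ => (1 : ℝ)) ω * |Z n ω|) P)
    (hLyap : ∀ n ω,
      Set.indicator (rareEvent V Y ζ t (n + 1)) (fun _ => (1 : ℝ)) ω * V (Y (n + 1) ω)
        ≤ Real.exp (ρ * (t (n + 1) - t n)) * V (Y n ω)
          + Set.indicator (rareEvent V Y ζ t (n + 1)) (fun _ => (1 : ℝ)) ω * Z (n + 1) ω) :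
    ∀ n : ℕ,
      (P ((rareEvent V Y ζ t n)ᶜ)).toReal
        ≤ ∑ k ∈ Finset.range n,
            (Real.exp (ρ * (t k - t 0)) * ∫ ω, V (Y 0 ω) ∂P
              + ∑ l ∈ Finset.Icc 1 k,
                  Real.exp (ρ * (t k - t l))
                    * ∫ ω, Set.indicator (rareEvent V Y ζ t l) (fun _ => (1 : ℝ)) ω * Z l ω ∂P)
            / (ζ (t (k + 1) - t k)).toReal := by
  classical
  set A : ℕ → Set Ω := rareEvent V Y ζ t with hAdef
  -- measurability of the events
  have hAmeas : ∀ n, MeasurableSet (A n) := by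
    intro n
    rw [hAdef]
    unfold rareEvent
    refine Finset.measurableSet_biInter _ (fun k _ => ?_)
    exact measurableSet_le (ENNReal.measurable_ofReal.comp (hV.comp (hY k))) measurable_const
  -- membership characterization
  have hAmem : ∀ n ω, ω ∈ A n ↔ ∀ k ∈ Finset.range n,
      ENNReal.ofReal (V (Y k ω)) ≤ ζ (t (k + 1) - t k) := by
    intro n ω
    rw [hAdef]
    unfold rareEvent
    simp [Set.mem_iInter₂]
  -- the events are decreasing
  have hAmono : ∀ n, A (n + 1) ⊆ A n := by
    intro n ω hω
    rw [hAmem] at hω ⊢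
    intro k hk
    exact hω k (Finset.mem_range.mpr (lt_trans (Finset.mem_range.mp hk) (Nat.lt_succ_self n)))
  -- indicator facts
  have hind_nn : ∀ (s : Set Ω) ω, 0 ≤ Set.indicator s (fun _ => (1 : ℝ)) ω := by
    intro s ω
    exact Set.indicator_nonneg (fun _ _ => zero_le_one) ω
  -- measurability of indicator-times functions
  have hfmeas : ∀ n, Measurable (fun ω => Set.indicator (A n) (fun _ => (1 : ℝ)) ω * V (Y n ω)) :=
    fun n => (measurable_const.indicator (hAmeas n)).mul (hV.comp (hY n))
  have hhmeas : ∀ n, Measurable (fun ω => Set.indicator (A n) (fun _ => (1 : ℝ)) ω * Z n ω) :=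
    fun n => (measurable_const.indicator (hAmeas n)).mul (hZ n)
  -- integrability of the indicator-Z terms
  have hhint : ∀ l, 1 ≤ l →
      Integrable (fun ω => Set.indicator (A l) (fun _ => (1 : ℝ)) ω * Z l ω) P := by
    intro l hl
    refine (hZint l hl).mono' (hhmeas l).aestronglyMeasurable ?_
    filter_upwards with ω
    rw [Real.norm_eq_abs, abs_mul, abs_of_nonneg (hind_nn _ ω)]
  -- pointwise one-step inequality with indicator on the right as well
  have hstep : ∀ n ω,
      Set.indicator (A (n + 1)) (fun _ => (1 : ℝ)) ω * V (Y (n + 1) ω)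
        ≤ Real.exp (ρ * (t (n + 1) - t n)) *
            (Set.indicator (A n) (fun _ => (1 : ℝ)) ω * V (Y n ω))
          + Set.indicator (A (n + 1)) (fun _ => (1 : ℝ)) ω * Z (n + 1) ω := by
    intro n ω
    by_cases hω : ω ∈ A (n + 1)
    · have h1 : Set.indicator (A (n + 1)) (fun _ => (1 : ℝ)) ω = 1 :=
        Set.indicator_of_mem hω _
      have h2 : Set.indicator (A n) (fun _ => (1 : ℝ)) ω = 1 :=
        Set.indicator_of_mem (hAmono n hω) _
      have := hLyap n ω
      rw [h1, h2]
      simpa [h1] using this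
    · have h1 : Set.indicator (A (n + 1)) (fun _ => (1 : ℝ)) ω = 0 :=
        Set.indicator_of_notMem hω _
      rw [h1]
      have : 0 ≤ Real.exp (ρ * (t (n + 1) - t n)) *
          (Set.indicator (A n) (fun _ => (1 : ℝ)) ω * V (Y n ω)) :=
        mul_nonneg (Real.exp_pos _).le (mul_nonneg (hind_nn _ ω) (hVnn _))
      linarith
  -- helper for exponentials
  have hexp : ∀ a b c : ℝ,
      Real.exp (ρ * (a - b)) * Real.exp (ρ * (b - c)) = Real.exp (ρ * (a - c)) := by
    intro a b c
    rw [← Real.exp_add]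
    ring_nf
  -- key induction: integrability and integral bound
  have key : ∀ k,
      Integrable (fun ω => Set.indicator (A k) (fun _ => (1 : ℝ)) ω * V (Y k ω)) P ∧
      ∫ ω, Set.indicator (A k) (fun _ => (1 : ℝ)) ω * V (Y k ω) ∂P ≤
        Real.exp (ρ * (t k - t 0)) * ∫ ω, V (Y 0 ω) ∂P
          + ∑ l ∈ Finset.Icc 1 k,
              Real.exp (ρ * (t k - t l))
                * ∫ ω, Set.indicator (A l) (fun _ => (1 : ℝ)) ω * Z l ω ∂P := by
    intro k
    induction k with
    | zero =>
      have hA0 : A 0 = Set.univ := by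
        rw [hAdef]; unfold rareEvent; simp
      constructor
      · simpa [hA0] using hint0
      · simp [hA0]
    | succ k ih =>
      obtain ⟨ihi, ihb⟩ := ih
      have hhintk : Integrable (fun ω =>
          Set.indicator (A (k + 1)) (fun _ => (1 : ℝ)) ω * Z (k + 1) ω) P :=
        hhint (k + 1) (by omega)
      -- integrable dominating function
      have hgint : Integrable (fun ω =>
          Real.exp (ρ * (t (k + 1) - t k)) *
            (Set.indicator (A k) (fun _ => (1 : ℝ)) ω * V (Y k ω))
          + Set.indicator (A (k + 1)) (fun _ => (1 : ℝ)) ω * |Z (k + 1) ω|) P :=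
        (ihi.const_mul _).add (hZint (k + 1) (by omega))
      have hfint : Integrable (fun ω =>
          Set.indicator (A (k + 1)) (fun _ => (1 : ℝ)) ω * V (Y (k + 1) ω)) P := by
        refine hgint.mono' (hfmeas (k + 1)).aestronglyMeasurable ?_
        filter_upwards with ω
        rw [Real.norm_eq_abs, abs_of_nonneg (mul_nonneg (hind_nn _ ω) (hVnn _))]
        refine le_trans (hstep k ω) (add_le_add_right ?_ _)
        calc Set.indicator (A (k + 1)) (fun _ => (1 : ℝ)) ω * Z (k + 1) ω
            ≤ |Set.indicator (A (k + 1)) (fun _ => (1 : ℝ)) ω * Z (k + 1) ω| := le_abs_self _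
          _ = Set.indicator (A (k + 1)) (fun _ => (1 : ℝ)) ω * |Z (k + 1) ω| := by
              rw [abs_mul, abs_of_nonneg (hind_nn _ ω)]
      refine ⟨hfint, ?_⟩
      have hmono : ∫ ω, Set.indicator (A (k + 1)) (fun _ => (1 : ℝ)) ω * V (Y (k + 1) ω) ∂P
          ≤ ∫ ω, (Real.exp (ρ * (t (k + 1) - t k)) *
              (Set.indicator (A k) (fun _ => (1 : ℝ)) ω * V (Y k ω))
            + Set.indicator (A (k + 1)) (fun _ => (1 : ℝ)) ω * Z (k + 1) ω) ∂P :=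
        integral_mono hfint ((ihi.const_mul _).add hhintk) (fun ω => hstep k ω)
      rw [integral_add (ihi.const_mul _) hhintk, integral_const_mul] at hmono
      refine le_trans hmono ?_
      have h2 : Real.exp (ρ * (t (k + 1) - t k)) *
          ∫ ω, Set.indicator (A k) (fun _ => (1 : ℝ)) ω * V (Y k ω) ∂P
          ≤ Real.exp (ρ * (t (k + 1) - t k)) *
            (Real.exp (ρ * (t k - t 0)) * ∫ ω, V (Y 0 ω) ∂P
              + ∑ l ∈ Finset.Icc 1 k,
                  Real.exp (ρ * (t k - t l))
                    * ∫ ω, Set.indicator (A l) (fun _ => (1 : ℝ)) ω * Z l ω ∂P) :=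
        mul_le_mul_of_nonneg_left ihb (Real.exp_pos _).le
      refine le_trans (add_le_add_left h2 _) (le_of_eq ?_)
      rw [Finset.sum_Icc_succ_top (by omega : 1 ≤ k + 1)]
      rw [mul_add, Finset.mul_sum]
      have : ∀ l, Real.exp (ρ * (t (k + 1) - t k)) * (Real.exp (ρ * (t k - t l))
          * ∫ ω, Set.indicator (A l) (fun _ => (1 : ℝ)) ω * Z l ω ∂P)
          = Real.exp (ρ * (t (k + 1) - t l))
          * ∫ ω, Set.indicator (A l) (fun _ => (1 : ℝ)) ω * Z l ω ∂P := by
        intro l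
        rw [← mul_assoc, hexp]
      simp only [this, ← mul_assoc, hexp]
      have h0 : Real.exp (ρ * (t (k + 1) - t (k + 1))) = 1 := by simp
      rw [h0, one_mul]
      ring
  -- the numerator is nonnegative (it dominates a nonnegative integral)
  have hnum_nn : ∀ k, 0 ≤ Real.exp (ρ * (t k - t 0)) * ∫ ω, V (Y 0 ω) ∂P
      + ∑ l ∈ Finset.Icc 1 k,
          Real.exp (ρ * (t k - t l))
            * ∫ ω, Set.indicator (A l) (fun _ => (1 : ℝ)) ω * Z l ω ∂P := by
    intro k
    refine le_trans ?_ (key k).2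
    exact integral_nonneg fun ω => mul_nonneg (hind_nn _ ω) (hVnn _)
  -- Markov / Chebyshev step
  have markov : ∀ k,
      (P (A k ∩ {ω | ζ (t (k + 1) - t k) < ENNReal.ofReal (V (Y k ω))})).toReal
        ≤ (Real.exp (ρ * (t k - t 0)) * ∫ ω, V (Y 0 ω) ∂P
            + ∑ l ∈ Finset.Icc 1 k,
                Real.exp (ρ * (t k - t l))
                  * ∫ ω, Set.indicator (A l) (fun _ => (1 : ℝ)) ω * Z l ω ∂P)
          / (ζ (t (k + 1) - t k)).toReal := by
    intro k
    set ε := ζ (t (k + 1) - t k) with hεdef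
    by_cases hεtop : ε = ∞
    · have hempty : A k ∩ {ω | ε < ENNReal.ofReal (V (Y k ω))} = ∅ := by
        ext ω
        simp [hεtop]
      rw [hempty, hεtop]
      simp [hnum_nn k]
    · have hε0 : ε ≠ 0 := (hζ _).ne'
      have hsub : A k ∩ {ω | ε < ENNReal.ofReal (V (Y k ω))} ⊆
          {ω | ε ≤ ENNReal.ofReal (Set.indicator (A k) (fun _ => (1 : ℝ)) ω * V (Y k ω))} := by
        intro ω ⟨hω1, hω2⟩
        have h1 : Set.indicator (A k) (fun _ => (1 : ℝ)) ω = 1 := Set.indicator_of_mem hω1 _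
        simp only [Set.mem_setOf_eq, h1, one_mul]
        exact le_of_lt hω2
      have hmarkov := MeasureTheory.meas_ge_le_lintegral_div
        (μ := P) (f := fun ω => ENNReal.ofReal
          (Set.indicator (A k) (fun _ => (1 : ℝ)) ω * V (Y k ω)))
        ((ENNReal.measurable_ofReal.comp (hfmeas k)).aemeasurable) hε0 hεtop
      have hlin : ∫⁻ ω, ENNReal.ofReal
          (Set.indicator (A k) (fun _ => (1 : ℝ)) ω * V (Y k ω)) ∂P
          = ENNReal.ofReal (∫ ω, Set.indicator (A k) (fun _ => (1 : ℝ)) ω * V (Y k ω) ∂P) := by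
        rw [MeasureTheory.ofReal_integral_eq_lintegral_ofReal (key k).1]
        filter_upwards with ω
        exact mul_nonneg (hind_nn _ ω) (hVnn _)
      have hPle : P (A k ∩ {ω | ε < ENNReal.ofReal (V (Y k ω))}) ≤
          ENNReal.ofReal (∫ ω, Set.indicator (A k) (fun _ => (1 : ℝ)) ω * V (Y k ω) ∂P) / ε := by
        refine le_trans (measure_mono hsub) ?_
        rw [← hlin]
        exact hmarkov
      have hRne : ENNReal.ofReal (∫ ω, Set.indicator (A k) (fun _ => (1 : ℝ)) ω
          * V (Y k ω) ∂P) / ε ≠ ∞ :=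
        (ENNReal.div_lt_top ENNReal.ofReal_ne_top hε0).ne
      have := ENNReal.toReal_mono hRne hPle
      refine le_trans this ?_
      rw [ENNReal.toReal_div, ENNReal.toReal_ofReal
        (integral_nonneg fun ω => mul_nonneg (hind_nn _ ω) (hVnn _))]
      exact div_le_div_of_nonneg_right (key k).2 ENNReal.toReal_nonneg
  -- complement decomposition
  have hsub : ∀ n, (A n)ᶜ ⊆ ⋃ k ∈ Finset.range n,
      (A k ∩ {ω | ζ (t (k + 1) - t k) < ENNReal.ofReal (V (Y k ω))}) := by
    intro n ω hω
    have hmem : ¬ ∀ k ∈ Finset.range n,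
        ENNReal.ofReal (V (Y k ω)) ≤ ζ (t (k + 1) - t k) := by
      intro hall
      exact hω ((hAmem n ω).mpr hall)
    push_neg at hmem
    obtain ⟨k0, hk0n, hk0⟩ := hmem
    have hex : ∃ k, ζ (t (k + 1) - t k) < ENNReal.ofReal (V (Y k ω)) := ⟨k0, hk0⟩
    have hm : ζ (t (Nat.find hex + 1) - t (Nat.find hex)) <
        ENNReal.ofReal (V (Y (Nat.find hex) ω)) := Nat.find_spec hex
    have hmle : Nat.find hex ≤ k0 := Nat.find_le hk0
    refine Set.mem_biUnion (Finset.mem_range.mpr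
      (lt_of_le_of_lt hmle (Finset.mem_range.mp hk0n))) ⟨?_, hm⟩
    refine (hAmem _ ω).mpr fun j hj => ?_
    exact not_lt.mp (Nat.find_min hex (Finset.mem_range.mp hj))
  -- assembly
  intro n
  have h1 : P ((A n)ᶜ) ≤ ∑ k ∈ Finset.range n,
      P (A k ∩ {ω | ζ (t (k + 1) - t k) < ENNReal.ofReal (V (Y k ω))}) :=
    le_trans (measure_mono (hsub n)) (measure_biUnion_finset_le _ _)
  have hsumne : (∑ k ∈ Finset.range n,
      P (A k ∩ {ω | ζ (t (k + 1) - t k) < ENNReal.ofReal (V (Y k ω))})) ≠ ∞ := by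
    refine (ENNReal.sum_lt_top.mpr fun k _ => ?_).ne
    exact measure_lt_top P _
  calc (P ((A n)ᶜ)).toReal
      ≤ (∑ k ∈ Finset.range n,
          P (A k ∩ {ω | ζ (t (k + 1) - t k) < ENNReal.ofReal (V (Y k ω))})).toReal :=
        ENNReal.toReal_mono hsumne h1
    _ = ∑ k ∈ Finset.range n,
          (P (A k ∩ {ω | ζ (t (k + 1) - t k) < ENNReal.ofReal (V (Y k ω))})).toReal :=
        ENNReal.toReal_sum fun k _ => measure_ne_top P _
    _ ≤ _ := Finset.sum_le_sum fun k _ => markov k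
end

section
/- Let T ∈ (0,∞), c ∈ [0,∞), p ∈ [1,∞), and let y : [0,T] → ℝ be an absolutely continuous function with y'(t) ≤ c |y(t)|^{1 - 1/p} for Lebesgue-almost all t ∈ [0,T]. Then y(t) ≤ (|y(0)|^{1/p} + c t / p)^p ≤ 2^{p-1}(|y(0)| + (c t / p)^p) for all t ∈ [0,T]. -/
open MeasureTheory

private lemma aux_two_pow (a b p : ℝ) (ha : 0 ≤ a) (hb : 0 ≤ b) (hp : 1 ≤ p) :
    (a + b) ^ p ≤ 2 ^ (p - 1) * (a ^ p + b ^ p) := by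
  lift a to NNReal using ha
  lift b to NNReal using hb
  exact_mod_cast NNReal.rpow_add_le_mul_rpow_add_rpow a b hp

/-- Gronwall-type comparison estimate for the differential inequality
`y' ≤ c |y|^{1-1/p}` a.e., for absolutely continuous `y` (encoded via the
fundamental theorem of calculus with a.e. derivative `g`). -/
theorem stmt4 (T c p : ℝ) (hT : 0 < T) (hc : 0 ≤ c) (hp : 1 ≤ p)
    (y g : ℝ → ℝ)
    (hy : ∀ t ∈ Set.Icc (0 : ℝ) T, y t = y 0 + ∫ s in (0 : ℝ)..t, g s)
    (hg : IntervalIntegrable g volume 0 T)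
    (hbound : ∀ᵐ s ∂(volume.restrict (Set.Icc (0 : ℝ) T)),
      g s ≤ c * |y s| ^ (1 - 1 / p)) :
    ∀ t ∈ Set.Icc (0 : ℝ) T,
      y t ≤ (|y 0| ^ (1 / p) + c * t / p) ^ p ∧
        (|y 0| ^ (1 / p) + c * t / p) ^ p ≤ 2 ^ (p - 1) * (|y 0| + (c * t / p) ^ p) := by
  have hp0 : (0:ℝ) < p := lt_of_lt_of_le one_pos hp
  set q : ℝ := 1 - 1 / p with hq
  have hq0 : 0 ≤ q := by
    have h1 : 1 / p ≤ 1 := by rw [div_le_one hp0]; exact hp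
    simp only [hq]; linarith
  -- continuity of y on [0, T]
  have hycont : ContinuousOn y (Set.Icc 0 T) := by
    have h1 : ContinuousOn (fun t => ∫ s in (0:ℝ)..t, g s) (Set.Icc 0 T) := by
      have := intervalIntegral.continuousOn_primitive_interval (μ := volume) (f := g)
        (a := 0) (b := T)
        (by rw [intervalIntegrable_iff_integrableOn_Icc_of_le hT.le] at hg
            simpa [Set.uIcc_of_le hT.le] using hg)
      simpa [Set.uIcc_of_le hT.le] using this
    exact (continuousOn_const.add h1).congr hy
  -- globally continuous version of y
  set π : ℝ → ℝ := fun t => max 0 (min t T) with hπdef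
  have hπ : Continuous π := continuous_const.max (continuous_id.min continuous_const)
  have hπmem : ∀ t, π t ∈ Set.Icc (0:ℝ) T :=
    fun t => ⟨le_max_left _ _, max_le hT.le (min_le_right _ _)⟩
  set Y : ℝ → ℝ := fun t => y (π t) with hYdef
  have hYcont : Continuous Y := hycont.comp_continuous hπ hπmem
  have hYeq : ∀ t ∈ Set.Icc (0:ℝ) T, Y t = y t := by
    intro t ht
    simp [hYdef, hπdef, min_eq_left ht.2, max_eq_right ht.1]
  -- integrability on subintervals
  have hgint : ∀ t ∈ Set.Icc (0:ℝ) T, IntervalIntegrable g volume 0 t := by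
    intro t ht
    exact hg.mono_set (by
      rw [Set.uIcc_of_le ht.1, Set.uIcc_of_le hT.le]
      exact Set.Icc_subset_Icc le_rfl ht.2)
  -- difference formula
  have hdiff : ∀ s ∈ Set.Icc (0:ℝ) T, ∀ t ∈ Set.Icc (0:ℝ) T,
      y t - y s = ∫ r in s..t, g r := by
    intro s hs t ht
    rw [hy t ht, hy s hs, add_sub_add_left_eq_sub]
    exact intervalIntegral.integral_interval_sub_left (hgint t ht) (hgint s hs)
  -- key epsilon estimate
  have key : ∀ ε > (0:ℝ), ∀ t0 ∈ Set.Icc (0:ℝ) T,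
      y t0 ≤ (|y 0| ^ (1/p) + ε + c * t0 / p) ^ p := by
    intro ε hε t0 ht0
    set a : ℝ := |y 0| ^ (1/p) + ε with ha
    have ha0 : 0 < a := add_pos_of_nonneg_of_pos (Real.rpow_nonneg (abs_nonneg _) _) hε
    set w : ℝ → ℝ := fun t => (a + c * t / p) ^ p with hwdef
    have hwbase : ∀ t : ℝ, 0 ≤ t → 0 < a + c * t / p := by
      intro t ht
      have h2 : 0 ≤ c * t / p := div_nonneg (mul_nonneg hc ht) hp0.le
      exact add_pos_of_pos_of_nonneg ha0 h2
    have hwpos : ∀ t : ℝ, 0 ≤ t → 0 < w t := fun t ht => Real.rpow_pos_of_pos (hwbase t ht) _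
    have hw0 : y 0 < w 0 := by
      have habs : |y 0| = (|y 0| ^ (1/p)) ^ p := by
        rw [← Real.rpow_mul (abs_nonneg _), one_div_mul_cancel hp0.ne', Real.rpow_one]
      have h1 : |y 0| < w 0 := by
        rw [habs, hwdef]
        simp only [mul_zero, zero_div, add_zero]
        exact Real.rpow_lt_rpow (Real.rpow_nonneg (abs_nonneg _) _) (by simp [ha]; linarith) hp0
      exact lt_of_le_of_lt (le_abs_self _) h1
    have hwcont : Continuous w :=
      (continuous_const.add ((continuous_const.mul continuous_id).div_const p)).rpow_const
        (fun x => Or.inr hp0.le)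
    have hwderiv : ∀ t : ℝ, HasDerivAt w (c * (a + c * t / p) ^ (p - 1)) t := by
      intro t
      have h1 : HasDerivAt (fun t : ℝ => a + c * t / p) (c / p) t := by
        simpa using (((hasDerivAt_id t).const_mul c).div_const p).const_add a
      have h2 : HasDerivAt (fun x : ℝ => x ^ p) (p * (a + c * t / p) ^ (p - 1))
          (a + c * t / p) := Real.hasDerivAt_rpow_const (Or.inr hp)
      have h3 := h2.comp t h1
      have h4 : p * (a + c * t / p) ^ (p - 1) * (c / p) = c * (a + c * t / p) ^ (p - 1) := by
        field_simp
      rw [h4] at h3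
      exact h3
    have hwftc : ∀ s t : ℝ, (∫ r in s..t, c * (a + c * r / p) ^ (p - 1)) = w t - w s := by
      intro s t
      apply intervalIntegral.integral_eq_sub_of_hasDerivAt (fun r _ => hwderiv r)
      apply Continuous.intervalIntegrable
      exact continuous_const.mul
        ((continuous_const.add ((continuous_const.mul continuous_id).div_const p)).rpow_const
          (fun x => Or.inr (by linarith)))
    have hwq : ∀ t : ℝ, 0 ≤ t → c * (a + c * t / p) ^ (p - 1) = c * w t ^ q := by
      intro t ht
      have hpq : p * q = p - 1 := by
        rw [hq]; field_simp
      rw [hwdef]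
      simp only
      rw [← Real.rpow_mul (hwbase t ht).le, hpq]
    by_contra hcon
    push_neg at hcon
    set S := Set.Icc 0 t0 ∩ {t | w t ≤ Y t} with hSdef
    have ht0S : t0 ∈ S := ⟨⟨ht0.1, le_refl _⟩, by
      simp only [Set.mem_setOf_eq]; rw [hYeq t0 ht0]; exact hcon.le⟩
    have hSclosed : IsClosed S := isClosed_Icc.inter (isClosed_le hwcont hYcont)
    have hSbdd : BddBelow S := ⟨0, fun t ht => ht.1.1⟩
    set t1 := sInf S with ht1def
    have ht1S : t1 ∈ S := hSclosed.csInf_mem ⟨t0, ht0S⟩ hSbdd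
    have ht1Icc : t1 ∈ Set.Icc (0:ℝ) t0 := ht1S.1
    have ht1T : t1 ∈ Set.Icc (0:ℝ) T := ⟨ht1Icc.1, le_trans ht1Icc.2 ht0.2⟩
    have ht1pos : 0 < t1 := by
      rcases eq_or_lt_of_le ht1Icc.1 with h | h
      · exfalso
        have h2 := ht1S.2
        simp only [Set.mem_setOf_eq, ← h] at h2
        rw [hYeq 0 ⟨le_refl 0, hT.le⟩] at h2
        exact absurd h2 (not_le.mpr hw0)
      · exact h
    have hlt : ∀ s : ℝ, 0 ≤ s → s < t1 → Y s < w s := by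
      intro s hs0 hst1
      by_contra hcon2
      push_neg at hcon2
      have hmem : s ∈ S := ⟨⟨hs0, le_trans hst1.le ht1Icc.2⟩, hcon2⟩
      exact absurd (csInf_le hSbdd hmem) (not_le.mpr hst1)
    have hYt1pos : 0 < Y t1 := lt_of_lt_of_le (hwpos t1 ht1Icc.1) ht1S.2
    obtain ⟨δ, hδ0, hδ⟩ : ∃ δ > (0:ℝ), ∀ r, |r - t1| < δ → 0 < Y r := by
      have hmem : {x | 0 < Y x} ∈ nhds t1 :=
        (isOpen_lt continuous_const hYcont).mem_nhds hYt1pos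
      rcases Metric.mem_nhds_iff.mp hmem with ⟨δ, hδ0, hδ⟩
      exact ⟨δ, hδ0, fun r hr => hδ (by simpa [Real.dist_eq] using hr)⟩
    set s := max 0 (t1 - δ/2) with hsdef
    have hs0 : 0 ≤ s := le_max_left _ _
    have hst1 : s < t1 := max_lt ht1pos (by linarith)
    have hsT : s ∈ Set.Icc (0:ℝ) T := ⟨hs0, le_trans hst1.le ht1T.2⟩
    have hsge : t1 - δ/2 ≤ s := le_max_right _ _
    have hYposIcc : ∀ r ∈ Set.Icc s t1, 0 < Y r := by
      intro r hr
      apply hδ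
      rw [abs_lt]
      constructor
      · linarith [hr.1]
      · linarith [hr.2]
    have hsub : Set.Icc s t1 ⊆ Set.Icc 0 T := Set.Icc_subset_Icc hs0 ht1T.2
    have e1 : y t1 - y s = ∫ r in s..t1, g r := hdiff s hsT t1 ht1T
    have hbcont : Continuous (fun r => c * |Y r| ^ q) :=
      continuous_const.mul (hYcont.abs.rpow_const (fun x => Or.inr hq0))
    have haeY : ∀ᵐ r ∂(volume.restrict (Set.Icc s t1)), g r ≤ c * |Y r| ^ q := by
      have h1 : ∀ᵐ r ∂(volume.restrict (Set.Icc s t1)), g r ≤ c * |y r| ^ q :=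
        ae_restrict_of_ae_restrict_of_subset hsub hbound
      have h2 : ∀ᵐ r ∂(volume.restrict (Set.Icc s t1)), r ∈ Set.Icc s t1 :=
        ae_restrict_mem measurableSet_Icc
      filter_upwards [h1, h2] with r hr1 hr2
      rw [hYeq r (hsub hr2)]
      exact hr1
    have e2 : (∫ r in s..t1, g r) ≤ ∫ r in s..t1, c * |Y r| ^ q :=
      intervalIntegral.integral_mono_ae_restrict hst1.le
        (hg.mono_set (by
          rw [Set.uIcc_of_le hst1.le, Set.uIcc_of_le hT.le]
          exact hsub))
        (hbcont.intervalIntegrable _ _) haeY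
    have haeW : ∀ᵐ r ∂(volume.restrict (Set.Icc s t1)), c * |Y r| ^ q ≤ c * w r ^ q := by
      have h2 : ∀ᵐ r ∂(volume.restrict (Set.Icc s t1)), r ∈ Set.Icc s t1 :=
        ae_restrict_mem measurableSet_Icc
      have h3 : ∀ᵐ r ∂(volume.restrict (Set.Icc s t1)), r ≠ t1 := by
        apply ae_restrict_of_ae
        rw [ae_iff]
        simp only [ne_eq, not_not, Set.setOf_eq_eq_singleton]
        exact measure_singleton t1
      filter_upwards [h2, h3] with r hr2 hr3
      have hr4 : r < t1 := lt_of_le_of_ne hr2.2 hr3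
      have h5 : |Y r| ≤ w r := by
        rw [abs_of_pos (hYposIcc r hr2)]
        exact (hlt r (le_trans hs0 hr2.1) hr4).le
      exact mul_le_mul_of_nonneg_left (Real.rpow_le_rpow (abs_nonneg _) h5 hq0) hc
    have e3 : (∫ r in s..t1, c * |Y r| ^ q) ≤ ∫ r in s..t1, c * w r ^ q :=
      intervalIntegral.integral_mono_ae_restrict hst1.le
        (hbcont.intervalIntegrable _ _)
        ((continuous_const.mul (hwcont.rpow_const fun x => Or.inr hq0)).intervalIntegrable _ _)
        haeW
    have e4 : (∫ r in s..t1, c * w r ^ q) = w t1 - w s := by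
      rw [← hwftc s t1]
      apply intervalIntegral.integral_congr
      intro r hr
      rw [Set.uIcc_of_le hst1.le] at hr
      exact (hwq r (le_trans hs0 hr.1)).symm
    have hfinal : y t1 - y s ≤ w t1 - w s := by
      rw [e1, ← e4]
      exact le_trans e2 e3
    have hy1 : w t1 ≤ y t1 := by rw [← hYeq t1 ht1T]; exact ht1S.2
    have hy2 : y s < w s := by rw [← hYeq s hsT]; exact hlt s hs0 hst1
    linarith
  -- conclude
  intro t ht
  constructor
  · have hten : Filter.Tendsto (fun ε : ℝ => (|y 0| ^ (1/p) + ε + c * t / p) ^ p)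
        (nhdsWithin 0 (Set.Ioi 0)) (nhds ((|y 0| ^ (1/p) + c * t / p) ^ p)) := by
      have hc1 : Continuous (fun ε : ℝ => |y 0| ^ (1/p) + ε + c * t / p) :=
        (continuous_const.add continuous_id).add continuous_const
      have h2 : ContinuousAt (fun x : ℝ => x ^ p) (|y 0| ^ (1/p) + (0:ℝ) + c * t / p) :=
        Real.continuousAt_rpow_const _ _ (Or.inr hp0.le)
      have h3 : ContinuousAt (fun ε : ℝ => (|y 0| ^ (1/p) + ε + c * t / p) ^ p) 0 :=
        ContinuousAt.comp (x := (0:ℝ)) (g := fun x : ℝ => x ^ p) h2 hc1.continuousAt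
      have h4 : Filter.Tendsto (fun ε : ℝ => (|y 0| ^ (1/p) + ε + c * t / p) ^ p)
          (nhds 0) (nhds ((|y 0| ^ (1/p) + c * t / p) ^ p)) := by
        simpa using h3.tendsto
      exact h4.mono_left nhdsWithin_le_nhds
    refine ge_of_tendsto hten ?_
    filter_upwards [self_mem_nhdsWithin] with ε hε
    exact key ε hε t ht
  · have hA : 0 ≤ |y 0| ^ (1/p) := Real.rpow_nonneg (abs_nonneg _) _
    have hB : 0 ≤ c * t / p := div_nonneg (mul_nonneg hc ht.1) hp0.le
    have h1 := aux_two_pow _ _ p hA hB hp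
    have hAp : (|y 0| ^ (1/p)) ^ p = |y 0| := by
      rw [← Real.rpow_mul (abs_nonneg _), one_div_mul_cancel hp0.ne', Real.rpow_one]
    rwa [hAp] at h1
end

section
/- Let c, p ∈ [1,∞), d ∈ ℕ, and let V : ℝ^d → ℝ be continuously differentiable with ‖(∇V)(x)‖ ≤ c |V(x)|^{1-1/p} for almost all x ∈ ℝ^d. Then V(x + y) ≤ |V(x)| + c^p 2^{p-1} ( ‖y‖ |V(x)|^{1 - 1/p} + ‖y‖^p ) for all x, y ∈ ℝ^d. -/
open MeasureTheory Set

/-- Nonlinear Grönwall estimate: if `|g'| ≤ C |g|^{1-1/p}` on `[0,1]` then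
`|g 1| ≤ (|g 0|^{1/p} + C/p)^p`. -/
private lemma gronwall_pow {p : ℝ} (hp : 1 ≤ p) {C : ℝ} (hC : 0 ≤ C)
    {g g' : ℝ → ℝ} (hg : ∀ t, HasDerivAt g (g' t) t)
    (hbound : ∀ t ∈ Icc (0 : ℝ) 1, |g' t| ≤ C * |g t| ^ (1 - 1 / p)) :
    |g 1| ≤ (|g 0| ^ (1 / p) + C / p) ^ p := by
  have hp0 : (0 : ℝ) < p := lt_of_lt_of_le one_pos hp
  set m : ℝ := |g 0| ^ (1 / p) with hm
  have hm0 : 0 ≤ m := Real.rpow_nonneg (abs_nonneg _) _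
  have hmp : |g 0| = m ^ p := by
    rw [hm, ← Real.rpow_mul (abs_nonneg _), one_div_mul_cancel hp0.ne', Real.rpow_one]
  have key : ∀ ε > (0 : ℝ), |g 1| ≤ (m + ε + (C + ε) / p) ^ p := by
    intro ε hε
    set L : ℝ → ℝ := fun t => m + ε + (C + ε) / p * t with hLdef
    have hLderiv : ∀ t : ℝ, HasDerivAt L ((C + ε) / p) t := by
      intro t
      simpa [hLdef] using (((hasDerivAt_id' t).const_mul ((C + ε) / p)).const_add (m + ε))
    have hLpos : ∀ t ∈ Ico (0 : ℝ) 1, 0 < L t := by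
      intro t ht
      have h1 : 0 ≤ (C + ε) / p * t :=
        mul_nonneg (div_nonneg (by linarith) hp0.le) ht.1
      simp only [hLdef]; linarith
    set B : ℝ → ℝ := fun t => L t ^ p with hBdef
    set B' : ℝ → ℝ := fun t => (C + ε) * L t ^ (p - 1) with hB'def
    have hB : ∀ t, HasDerivAt B (B' t) t := by
      intro t
      have h1 : HasDerivAt (fun x : ℝ => x ^ p) (p * L t ^ (p - 1)) (L t) :=
        Real.hasDerivAt_rpow_const (Or.inr hp)
      have h2 := h1.comp t (hLderiv t)
      convert h2 using 1 <;> try rfl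
      simp only [hB'def]
      field_simp
    have ha : ‖g 0‖ ≤ B 0 := by
      have hB0 : B 0 = (m + ε) ^ p := by simp [hBdef, hLdef]
      rw [Real.norm_eq_abs, hmp, hB0]
      exact Real.rpow_le_rpow hm0 (by linarith) hp0.le
    have hcont : ContinuousOn g (Icc (0 : ℝ) 1) := fun t _ =>
      (hg t).continuousAt.continuousWithinAt
    have hf' : ∀ t ∈ Ico (0 : ℝ) 1, HasDerivWithinAt g (g' t) (Ici t) t := fun t _ =>
      (hg t).hasDerivWithinAt
    have bound : ∀ t ∈ Ico (0 : ℝ) 1, ‖g t‖ = B t → ‖g' t‖ < B' t := by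
      intro t ht habs
      have hLt := hLpos t ht
      have hgt : |g t| = L t ^ p := by rw [← Real.norm_eq_abs, habs]
      have h1 : |g' t| ≤ C * |g t| ^ (1 - 1 / p) :=
        hbound t ⟨ht.1, ht.2.le⟩
      have h2 : |g t| ^ (1 - 1 / p) = L t ^ (p - 1) := by
        rw [hgt, ← Real.rpow_mul hLt.le]
        congr 1
        field_simp
      have h3 : C * L t ^ (p - 1) < (C + ε) * L t ^ (p - 1) :=
        mul_lt_mul_of_pos_right (by linarith) (Real.rpow_pos_of_pos hLt _)
      rw [Real.norm_eq_abs]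
      calc |g' t| ≤ C * L t ^ (p - 1) := by rw [← h2]; exact h1
        _ < B' t := h3
    have := image_norm_le_of_norm_deriv_right_lt_deriv_boundary hcont hf' ha hB bound
      (show (1 : ℝ) ∈ Icc (0 : ℝ) 1 by norm_num)
    rw [Real.norm_eq_abs] at this
    calc |g 1| ≤ B 1 := this
      _ = (m + ε + (C + ε) / p) ^ p := by simp [hBdef, hLdef]
  -- pass to the limit ε → 0⁺
  set F : ℝ → ℝ := fun ε => (m + ε + (C + ε) / p) ^ p with hF
  have hFc : ContinuousAt F 0 := by
    have h1 : Continuous fun ε : ℝ => m + ε + (C + ε) / p := by fun_prop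
    exact ContinuousAt.comp (Real.continuousAt_rpow_const _ _ (Or.inr hp0.le)) h1.continuousAt
  have hF0 : F 0 = (m + C / p) ^ p := by simp [hF]
  have hlim : Filter.Tendsto F (nhdsWithin 0 (Ioi 0)) (nhds ((m + C / p) ^ p)) := by
    rw [← hF0]
    exact hFc.continuousWithinAt.tendsto
  have hle : ∀ᶠ ε in nhdsWithin (0 : ℝ) (Ioi 0), |g 1| ≤ F ε := by
    filter_upwards [self_mem_nhdsWithin] with ε hε
    exact key ε hε
  exact ge_of_tendsto hlim hle

/-- `(a+b)^q ≤ 2^q (a^q + b^q)` for nonnegative `a, b` and `q ≥ 0`. -/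
private lemma two_rpow_bound {q : ℝ} (hq : 0 ≤ q) {a b : ℝ} (ha : 0 ≤ a) (hb : 0 ≤ b) :
    (a + b) ^ q ≤ 2 ^ q * (a ^ q + b ^ q) := by
  have h1 : a + b ≤ 2 * max a b := by
    rcases le_total a b with h | h
    · rw [max_eq_right h]; linarith
    · rw [max_eq_left h]; linarith
  have hmax : 0 ≤ max a b := le_max_of_le_left ha
  calc (a + b) ^ q ≤ (2 * max a b) ^ q :=
        Real.rpow_le_rpow (add_nonneg ha hb) h1 hq
    _ = 2 ^ q * (max a b) ^ q := Real.mul_rpow (by norm_num) hmax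
    _ ≤ 2 ^ q * (a ^ q + b ^ q) := by
        apply mul_le_mul_of_nonneg_left _ (Real.rpow_nonneg (by norm_num) _)
        rcases le_total a b with h | h
        · rw [max_eq_right h]
          exact le_add_of_nonneg_left (Real.rpow_nonneg ha _)
        · rw [max_eq_left h]
          exact le_add_of_nonneg_right (Real.rpow_nonneg hb _)

/-- Mean value estimate `(a+b)^p ≤ a^p + p (a+b)^{p-1} b`. -/
private lemma mvt_rpow {p : ℝ} (hp : 1 ≤ p) {a b : ℝ} (ha : 0 ≤ a) (hb : 0 ≤ b) :
    (a + b) ^ p ≤ a ^ p + p * (a + b) ^ (p - 1) * b := by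
  rcases eq_or_lt_of_le hb with hb0 | hb0
  · rw [← hb0]; simp
  have hab : a < a + b := by linarith
  have hcont : ContinuousOn (fun x : ℝ => x ^ p) (Icc a (a + b)) :=
    (Real.continuous_rpow_const (by linarith)).continuousOn
  have hderiv : ∀ x ∈ Ioo a (a + b), HasDerivAt (fun x : ℝ => x ^ p) (p * x ^ (p - 1)) x :=
    fun x _ => Real.hasDerivAt_rpow_const (Or.inr hp)
  obtain ⟨ξ, hξ, hslope⟩ :=
    exists_hasDerivAt_eq_slope (fun x : ℝ => x ^ p) (fun x => p * x ^ (p - 1)) hab hcont hderiv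
  have hξ0 : 0 ≤ ξ := le_of_lt (lt_of_le_of_lt ha hξ.1)
  have h1 : p * ξ ^ (p - 1) ≤ p * (a + b) ^ (p - 1) :=
    mul_le_mul_of_nonneg_left (Real.rpow_le_rpow hξ0 hξ.2.le (by linarith))
      (by linarith : (0:ℝ) ≤ p)
  have hba : a + b - a = b := by ring
  rw [hba] at hslope
  have h2 : ((a + b) ^ p - a ^ p) / b ≤ p * (a + b) ^ (p - 1) := hslope ▸ h1
  have h3 := (div_le_iff₀ hb0).mp h2
  linarith

/-- Combined algebraic estimate. -/
private lemma alg_bound {p c n m : ℝ} (hp : 1 ≤ p) (hc : 1 ≤ c) (hn : 0 ≤ n) (hm : 0 ≤ m) :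
    (m ^ (1 / p) + c * n / p) ^ p
      ≤ m + c ^ p * 2 ^ (p - 1) * (n * m ^ (1 - 1 / p) + n ^ p) := by
  have hp0 : (0 : ℝ) < p := lt_of_lt_of_le one_pos hp
  have hc0 : (0 : ℝ) ≤ c := by linarith
  set a : ℝ := m ^ (1 / p) with hadef
  set b : ℝ := c * n / p with hbdef
  have ha0 : 0 ≤ a := Real.rpow_nonneg hm _
  have hb0 : 0 ≤ b := div_nonneg (mul_nonneg hc0 hn) hp0.le
  have hap : a ^ p = m := by
    rw [hadef, ← Real.rpow_mul hm, one_div_mul_cancel hp0.ne', Real.rpow_one]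
  have hapm : a ^ (p - 1) = m ^ (1 - 1 / p) := by
    rw [hadef, ← Real.rpow_mul hm]
    congr 1
    field_simp
  have h1 := mvt_rpow hp ha0 hb0
  have h2 := two_rpow_bound (by linarith : (0:ℝ) ≤ p - 1) ha0 hb0
  have hpb : p * b = c * n := by rw [hbdef]; field_simp
  have hbcn : b ≤ c * n := by
    rw [hbdef]
    calc c * n / p ≤ c * n / 1 := by
          apply div_le_div_of_nonneg_left (mul_nonneg hc0 hn) one_pos hp
      _ = c * n := by ring
  have hbp : b ^ (p - 1) * (c * n) ≤ (c * n) ^ p := by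
    rcases eq_or_lt_of_le (mul_nonneg hc0 hn) with h0 | h0
    · rw [← h0, mul_zero]
      exact Real.rpow_nonneg le_rfl _
    · have hb1 : b ^ (p - 1) ≤ (c * n) ^ (p - 1) :=
        Real.rpow_le_rpow hb0 hbcn (by linarith)
      calc b ^ (p - 1) * (c * n) ≤ (c * n) ^ (p - 1) * (c * n) :=
            mul_le_mul_of_nonneg_right hb1 h0.le
        _ = (c * n) ^ p := by
            rw [← Real.rpow_add_one h0.ne']
            ring_nf
  have hcnp : (c * n) ^ p = c ^ p * n ^ p := Real.mul_rpow hc0 hn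
  have hccp : c ≤ c ^ p := by
    calc c = c ^ (1 : ℝ) := (Real.rpow_one c).symm
      _ ≤ c ^ p := Real.rpow_le_rpow_of_exponent_le hc hp
  set T : ℝ := (2 : ℝ) ^ (p - 1) with hT
  have hT0 : 0 ≤ T := Real.rpow_nonneg (by norm_num) _
  have hA0 : 0 ≤ m ^ (1 - 1 / p) := Real.rpow_nonneg hm _
  -- chain the estimates
  have step1 : (a + b) ^ p ≤ m + p * (a + b) ^ (p - 1) * b := by
    rw [← hap]; exact h1
  have step2 : p * (a + b) ^ (p - 1) * b ≤ T * (a ^ (p - 1) * (c * n) + b ^ (p - 1) * (c * n)) := by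
    have := mul_le_mul_of_nonneg_right h2 (mul_nonneg (by linarith : (0:ℝ) ≤ p) hb0)
    calc p * (a + b) ^ (p - 1) * b = (a + b) ^ (p - 1) * (p * b) := by ring
      _ ≤ T * (a ^ (p - 1) + b ^ (p - 1)) * (p * b) := by
          apply mul_le_mul_of_nonneg_right h2
          rw [hpb]; exact mul_nonneg hc0 hn
      _ = T * (a ^ (p - 1) * (p * b) + b ^ (p - 1) * (p * b)) := by ring
      _ = T * (a ^ (p - 1) * (c * n) + b ^ (p - 1) * (c * n)) := by rw [hpb]
  have step3 : T * (a ^ (p - 1) * (c * n) + b ^ (p - 1) * (c * n))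
      ≤ T * (c ^ p * (n * m ^ (1 - 1 / p)) + c ^ p * n ^ p) := by
    apply mul_le_mul_of_nonneg_left _ hT0
    have e1 : a ^ (p - 1) * (c * n) ≤ c ^ p * (n * m ^ (1 - 1 / p)) := by
      rw [hapm]
      calc m ^ (1 - 1 / p) * (c * n) = c * (n * m ^ (1 - 1 / p)) := by ring
        _ ≤ c ^ p * (n * m ^ (1 - 1 / p)) :=
            mul_le_mul_of_nonneg_right hccp (mul_nonneg hn hA0)
    have e2 : b ^ (p - 1) * (c * n) ≤ c ^ p * n ^ p := by
      rw [← hcnp]; exact hbp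
    linarith
  calc (m ^ (1 / p) + c * n / p) ^ p = (a + b) ^ p := rfl
    _ ≤ m + p * (a + b) ^ (p - 1) * b := step1
    _ ≤ m + T * (a ^ (p - 1) * (c * n) + b ^ (p - 1) * (c * n)) := by linarith
    _ ≤ m + T * (c ^ p * (n * m ^ (1 - 1 / p)) + c ^ p * n ^ p) := by linarith
    _ = m + c ^ p * T * (n * m ^ (1 - 1 / p) + n ^ p) := by ring

/-- Refined growth estimate for a `C¹` Lyapunov-type function whose gradient
satisfies `‖∇V(x)‖ ≤ c |V(x)|^{1-1/p}` for Lebesgue-almost all `x`. -/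
theorem stmt8 {d : ℕ} (c p : ℝ) (hc : 1 ≤ c) (hp : 1 ≤ p)
    (V : EuclideanSpace ℝ (Fin d) → ℝ) (hV : ContDiff ℝ 1 V)
    (hgrad : ∀ᵐ x ∂(volume : Measure (EuclideanSpace ℝ (Fin d))),
      ‖fderiv ℝ V x‖ ≤ c * |V x| ^ (1 - 1 / p)) :
    ∀ x y : EuclideanSpace ℝ (Fin d),
      V (x + y) ≤ |V x| + c ^ p * 2 ^ (p - 1) * (‖y‖ * |V x| ^ (1 - 1 / p) + ‖y‖ ^ p) := by
  have hp0 : (0 : ℝ) < p := lt_of_lt_of_le one_pos hp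
  have hc0 : (0 : ℝ) ≤ c := by linarith
  -- upgrade the a.e. bound to an everywhere bound, using continuity
  have hgrad' : ∀ x, ‖fderiv ℝ V x‖ ≤ c * |V x| ^ (1 - 1 / p) := by
    have hcont1 : Continuous fun x : EuclideanSpace ℝ (Fin d) => ‖fderiv ℝ V x‖ :=
      (hV.continuous_fderiv one_ne_zero).norm
    have hcont2 : Continuous fun x : EuclideanSpace ℝ (Fin d) => c * |V x| ^ (1 - 1 / p) := by
      have he : 0 ≤ 1 - 1 / p := by
        have : 1 / p ≤ 1 := by
          rw [div_le_one hp0]; exact hp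
        linarith
      exact continuous_const.mul
        ((Real.continuous_rpow_const he).comp hV.continuous.abs)
    by_contra h
    push_neg at h
    obtain ⟨x₀, hx₀⟩ := h
    set U := {x : EuclideanSpace ℝ (Fin d) | c * |V x| ^ (1 - 1 / p) < ‖fderiv ℝ V x‖} with hU
    have hUopen : IsOpen U := isOpen_lt hcont2 hcont1
    have hU0 : volume U = 0 := by
      rw [MeasureTheory.ae_iff] at hgrad
      have : U = {x : EuclideanSpace ℝ (Fin d) |
          ¬ ‖fderiv ℝ V x‖ ≤ c * |V x| ^ (1 - 1 / p)} := by
        ext z; simp [hU, not_le]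
      rw [this]
      exact hgrad
    have : U = ∅ := hUopen.eq_empty_of_measure_zero hU0
    exact absurd (this ▸ hx₀ : x₀ ∈ (∅ : Set (EuclideanSpace ℝ (Fin d)))) (by simp)
  intro x y
  set g : ℝ → ℝ := fun t => V (x + t • y) with hgdef
  set g' : ℝ → ℝ := fun t => fderiv ℝ V (x + t • y) y with hg'def
  have hline : ∀ t : ℝ, HasDerivAt (fun s : ℝ => x + s • y) y t := by
    intro t
    simpa using ((hasDerivAt_id t).smul_const y).const_add x
  have hg : ∀ t, HasDerivAt g (g' t) t := fun t =>
    ((hV.differentiable one_ne_zero) (x + t • y)).hasFDerivAt.comp_hasDerivAt t (hline t)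
  set C : ℝ := c * ‖y‖ with hCdef
  have hC0 : 0 ≤ C := mul_nonneg hc0 (norm_nonneg y)
  have hbound : ∀ t ∈ Set.Icc (0 : ℝ) 1, |g' t| ≤ C * |g t| ^ (1 - 1 / p) := by
    intro t ht
    have h1 : |g' t| ≤ ‖fderiv ℝ V (x + t • y)‖ * ‖y‖ := by
      rw [← Real.norm_eq_abs]
      exact (fderiv ℝ V (x + t • y)).le_opNorm y
    calc |g' t| ≤ ‖fderiv ℝ V (x + t • y)‖ * ‖y‖ := h1
      _ ≤ c * |V (x + t • y)| ^ (1 - 1 / p) * ‖y‖ :=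
          mul_le_mul_of_nonneg_right (hgrad' _) (norm_nonneg y)
      _ = C * |g t| ^ (1 - 1 / p) := by rw [hCdef, hgdef]; ring
  have key := gronwall_pow hp hC0 hg hbound
  have hg1 : g 1 = V (x + y) := by simp [hgdef]
  have hg0 : g 0 = V x := by simp [hgdef]
  rw [hg1, hg0] at key
  have halg := alg_bound (n := ‖y‖) (m := |V x|) hp hc (norm_nonneg y) (abs_nonneg _)
  calc V (x + y) ≤ |V (x + y)| := le_abs_self _
    _ ≤ (|V x| ^ (1 / p) + C / p) ^ p := key
    _ = (|V x| ^ (1 / p) + c * ‖y‖ / p) ^ p := by rw [hCdef]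
    _ ≤ |V x| + c ^ p * 2 ^ (p - 1) * (‖y‖ * |V x| ^ (1 - 1 / p) + ‖y‖ ^ p) := halg
end

section
/- Let d ∈ ℕ, c ∈ (0,∞), and let μ : ℝ^d → ℝ^d be a function with ⟨x, μ(x)⟩ ≤ c(1 + ‖x‖²) for all x ∈ ℝ^d. Then for all x ∈ ℝ^d and all s, t ∈ [0, 1/(4c)] with s ≤ t it holds that 1 + ‖x - μ(x) s‖² ≤ e^{4c(t-s)} (1 + ‖x - μ(x) t‖²). -/
theorem stmt10 {d : ℕ} (c : ℝ) (hc : 0 < c)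
    (μ : EuclideanSpace ℝ (Fin d) → EuclideanSpace ℝ (Fin d))
    (hμ : ∀ x, (inner ℝ x (μ x) : ℝ) ≤ c * (1 + ‖x‖ ^ 2)) :
    ∀ (x : EuclideanSpace ℝ (Fin d)) (s t : ℝ),
      s ∈ Set.Icc (0 : ℝ) (1 / (4 * c)) → t ∈ Set.Icc (0 : ℝ) (1 / (4 * c)) → s ≤ t →
      1 + ‖x - s • μ x‖ ^ 2 ≤ Real.exp (4 * c * (t - s)) * (1 + ‖x - t • μ x‖ ^ 2) := by
  intro x s t hs ht hst
  obtain ⟨hs0, hs1⟩ := hs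
  obtain ⟨ht0, ht1⟩ := ht
  set a : ℝ := inner ℝ x (μ x) with ha
  set n : ℝ := ‖x‖ ^ 2 with hn
  set m : ℝ := ‖μ x‖ ^ 2 with hm
  have hexp : ∀ r : ℝ, ‖x - r • μ x‖ ^ 2 = n - 2 * r * a + r ^ 2 * m := by
    intro r
    have h1 : ‖x - r • μ x‖ ^ 2 = ‖x‖ ^ 2 - 2 * inner ℝ x (r • μ x) + ‖r • μ x‖ ^ 2 := by
      rw [norm_sub_sq_real]
    rw [h1, real_inner_smul_right, norm_smul]
    simp [hn, hm, ha, mul_pow]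
    ring
  have hct : 4 * c * t ≤ 1 := by
    rw [le_div_iff₀ (by positivity : (0:ℝ) < 4 * c)] at ht1
    linarith
  have h2t : 0 ≤ n - 4 * t * a + 4 * t ^ 2 * m := by
    have h := hexp (2 * t)
    nlinarith [sq_nonneg ‖x - (2 * t) • μ x‖]
  have hacn : a ≤ c * (1 + n) := hμ x
  have hm0 : 0 ≤ m := sq_nonneg _
  have hn0 : 0 ≤ n := sq_nonneg _
  have hy0 : 0 ≤ n - 2 * t * a + t ^ 2 * m := by rw [← hexp t]; positivity
  have hbr : 0 ≤ -2 * a + (t + s) * m + 4 * c * (1 + (n - 2 * t * a + t ^ 2 * m)) := by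
    nlinarith [mul_nonneg hc.le h2t, mul_nonneg hs0 hm0,
      mul_nonneg (mul_nonneg ht0 hm0) (by linarith : (0:ℝ) ≤ 1 - 4 * c * t)]
  have key : 1 + (n - 2 * s * a + s ^ 2 * m) ≤
      (1 + 4 * c * (t - s)) * (1 + (n - 2 * t * a + t ^ 2 * m)) := by
    nlinarith [mul_nonneg (sub_nonneg.2 hst) hbr]
  have hexp' : 1 + 4 * c * (t - s) ≤ Real.exp (4 * c * (t - s)) := by
    have := Real.add_one_le_exp (4 * c * (t - s)); linarith
  have hpos : 0 ≤ 1 + (n - 2 * t * a + t ^ 2 * m) := by linarith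
  calc 1 + ‖x - s • μ x‖ ^ 2 = 1 + (n - 2 * s * a + s ^ 2 * m) := by rw [hexp s]
    _ ≤ (1 + 4 * c * (t - s)) * (1 + (n - 2 * t * a + t ^ 2 * m)) := key
    _ ≤ Real.exp (4 * c * (t - s)) * (1 + (n - 2 * t * a + t ^ 2 * m)) := by
        apply mul_le_mul_of_nonneg_right hexp' hpos
    _ = Real.exp (4 * c * (t - s)) * (1 + ‖x - t • μ x‖ ^ 2) := by rw [hexp t]
end

section
/- Let c ∈ [0,∞), T ∈ (0,∞), let a, b, σ : ℝ → ℝ be Borel measurable with x(a(x)x + b(x)) + (1/2)|σ(x)|² ≤ c(1+x²), a(x) ≤ c, and |b(x)|² ≤ c(1+x²) for all x ∈ ℝ, and let W be a one-dimensional standard Brownian motion. Then for all t ∈ [0, 1/(2c)] and all x ∈ ℝ it holds that E[ 1 + (x + b(x)t + σ(x)W_t)² / (1 - a(x)t)² ] ≤ (1 + x²) e^{(8c+2)t}. -/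
open MeasureTheory ProbabilityTheory Real Set Filter
open scoped NNReal ENNReal

lemma mom1 {β : ℝ} (hb : 0 < β) : ∫ x : ℝ, x * Real.exp (-β * x ^ 2) = 0 := by
  have h := (Measure.measurePreserving_neg (volume : Measure ℝ)).integral_comp
    (Homeomorph.neg ℝ).measurableEmbedding (fun x : ℝ => x * Real.exp (-β * x ^ 2))
  have h2 : ∫ x : ℝ, -(x * Real.exp (-β * x ^ 2)) = ∫ x : ℝ, x * Real.exp (-β * x ^ 2) := by
    rw [← h]
    congr 1
    ext x
    show -(x * Real.exp (-β * x ^ 2)) = (-x) * Real.exp (-β * (-x) ^ 2)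
    rw [neg_sq]; ring
  rw [integral_neg] at h2
  linarith

lemma mom2 {β : ℝ} (hb : 0 < β) :
    ∫ x : ℝ, x ^ 2 * Real.exp (-β * x ^ 2) = Real.sqrt (π / β) / (2 * β) := by
  have hint2 : Integrable fun x : ℝ => x ^ 2 * Real.exp (-β * x ^ 2) := by
    have := integrable_rpow_mul_exp_neg_mul_sq hb (s := 2) (by norm_num)
    simpa [Real.rpow_two] using this
  have key : ∫ x in Ioi (0:ℝ),
      (Real.exp (-β * x ^ 2) - 2 * β * (x ^ 2 * Real.exp (-β * x ^ 2))) = 0 := by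
    have hderiv : ∀ x ∈ Ici (0:ℝ), HasDerivAt (fun x : ℝ => x * Real.exp (-β * x ^ 2))
        (Real.exp (-β * x ^ 2) - 2 * β * (x ^ 2 * Real.exp (-β * x ^ 2))) x := by
      intro x _
      have h1 : HasDerivAt (fun x : ℝ => -β * x ^ 2) (-β * (2 * x)) x := by
        simpa using ((hasDerivAt_pow 2 x).const_mul (-β))
      have h3 : HasDerivAt (fun y : ℝ => y * Real.exp (-β * y ^ 2)) _ x := (hasDerivAt_id x).mul h1.exp
      convert h3 using 1
      simp only [id_eq, one_mul]
      ring
    have hfint : IntegrableOn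
        (fun x : ℝ => Real.exp (-β * x ^ 2) - 2 * β * (x ^ 2 * Real.exp (-β * x ^ 2)))
        (Ioi 0) :=
      ((integrable_exp_neg_mul_sq hb).sub (hint2.const_mul (2*β))).integrableOn
    have htend : Tendsto (fun x : ℝ => x * Real.exp (-β * x ^ 2)) atTop (nhds 0) := by
      have h0 := rpow_mul_exp_neg_mul_sq_isLittleO_exp_neg hb 1
      simp only [Real.rpow_one] at h0
      have h1 : Tendsto (fun x : ℝ => Real.exp (-(1/2) * x)) atTop (nhds 0) :=
        Real.tendsto_exp_atBot.comp
          (tendsto_id.const_mul_atTop_of_neg (by norm_num : (-(1/2):ℝ) < 0))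
      exact h0.trans_tendsto h1
    have := MeasureTheory.integral_Ioi_of_hasDerivAt_of_tendsto' hderiv hfint htend
    simpa using this
  have hIoi : ∫ x in Ioi (0:ℝ), x ^ 2 * Real.exp (-β * x ^ 2)
      = (2 * β)⁻¹ * (Real.sqrt (π / β) / 2) := by
    have hs := integral_sub (integrable_exp_neg_mul_sq hb).integrableOn
      ((hint2.const_mul (2*β)).integrableOn (s := Ioi 0))
    rw [hs] at key
    rw [integral_const_mul] at key
    have hg : ∫ x in Ioi (0:ℝ), Real.exp (-β * x ^ 2) = Real.sqrt (π / β) / 2 :=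
      integral_gaussian_Ioi β
    rw [hg] at key
    have h2b : (2 * β) ≠ 0 := by positivity
    field_simp at key ⊢
    linarith
  have habs : ∫ x : ℝ, x ^ 2 * Real.exp (-β * x ^ 2)
      = 2 * ∫ x in Ioi (0:ℝ), x ^ 2 * Real.exp (-β * x ^ 2) := by
    have := integral_comp_abs (f := fun y : ℝ => y ^ 2 * Real.exp (-β * y ^ 2))
    simp only [sq_abs] at this
    exact this
  rw [habs, hIoi]
  rw [div_eq_mul_inv]
  ring

section gauss
variable {v : ℝ}

lemma pdf_eq (hv : 0 < v) (x : ℝ) :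
    gaussianPDFReal 0 v.toNNReal x
      = (Real.sqrt (2 * π * v))⁻¹ * Real.exp (-((2*v)⁻¹) * x ^ 2) := by
  rw [gaussianPDFReal]
  rw [Real.coe_toNNReal v hv.le]
  congr 1
  rw [sub_zero]
  congr 1
  field_simp

lemma gauss_density (hv : 0 < v) :
    gaussianReal 0 v.toNNReal = volume.withDensity
      (fun x => ((Real.toNNReal (gaussianPDFReal 0 v.toNNReal x) : ℝ≥0) : ℝ≥0∞)) := by
  rw [gaussianReal_of_var_ne_zero 0 (by simp [hv, Real.toNNReal_pos.mpr hv, hv.ne'] :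
    v.toNNReal ≠ 0)]
  rfl

lemma f_meas : Measurable (fun x => (Real.toNNReal (gaussianPDFReal 0 v.toNNReal x) : ℝ≥0)) :=
  (measurable_gaussianPDFReal 0 v.toNNReal).real_toNNReal

lemma smul_eq (hv : 0 < v) (x y : ℝ) :
    (Real.toNNReal (gaussianPDFReal 0 v.toNNReal x) : ℝ≥0) • y
      = (Real.sqrt (2 * π * v))⁻¹ * Real.exp (-((2*v)⁻¹) * x ^ 2) * y := by
  rw [NNReal.smul_def, smul_eq_mul,
    Real.coe_toNNReal _ (gaussianPDFReal_nonneg 0 v.toNNReal x), pdf_eq hv]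

lemma gauss_integrable (hv : 0 < v) (A B : ℝ) :
    Integrable (fun w : ℝ => (A + B * w) ^ 2) (gaussianReal 0 v.toNNReal) := by
  have hβ : 0 < (2*v)⁻¹ := by positivity
  rw [gauss_density hv, integrable_withDensity_iff_integrable_smul f_meas]
  have : (fun x : ℝ => (Real.toNNReal (gaussianPDFReal 0 v.toNNReal x) : ℝ≥0)
        • (A + B * x) ^ 2)
      = fun x : ℝ => ((Real.sqrt (2 * π * v))⁻¹ * A ^ 2) * Real.exp (-((2*v)⁻¹) * x ^ 2)
        + ((Real.sqrt (2 * π * v))⁻¹ * (2 * A * B)) * (x * Real.exp (-((2*v)⁻¹) * x ^ 2))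
        + ((Real.sqrt (2 * π * v))⁻¹ * B ^ 2) * (x ^ 2 * Real.exp (-((2*v)⁻¹) * x ^ 2)) := by
    ext x
    rw [smul_eq hv x]
    ring
  rw [this]
  have i0 := integrable_exp_neg_mul_sq hβ
  have i1 : Integrable fun x : ℝ => x * Real.exp (-((2*v)⁻¹) * x ^ 2) := by
    have := integrable_rpow_mul_exp_neg_mul_sq hβ (s := 1) (by norm_num)
    simpa [Real.rpow_one] using this
  have i2 : Integrable fun x : ℝ => x ^ 2 * Real.exp (-((2*v)⁻¹) * x ^ 2) := by
    have := integrable_rpow_mul_exp_neg_mul_sq hβ (s := 2) (by norm_num)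
    simpa [Real.rpow_two] using this
  exact ((i0.const_mul _).add (i1.const_mul _)).add (i2.const_mul _)

lemma gauss_int (hv : 0 < v) (A B : ℝ) :
    ∫ w, (A + B * w) ^ 2 ∂(gaussianReal 0 v.toNNReal) = A ^ 2 + B ^ 2 * v := by
  have hβ : 0 < (2*v)⁻¹ := by positivity
  rw [gauss_density hv, integral_withDensity_eq_integral_smul f_meas]
  have i0 := integrable_exp_neg_mul_sq hβ
  have i1 : Integrable fun x : ℝ => x * Real.exp (-((2*v)⁻¹) * x ^ 2) := by
    have := integrable_rpow_mul_exp_neg_mul_sq hβ (s := 1) (by norm_num)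
    simpa [Real.rpow_one] using this
  have i2 : Integrable fun x : ℝ => x ^ 2 * Real.exp (-((2*v)⁻¹) * x ^ 2) := by
    have := integrable_rpow_mul_exp_neg_mul_sq hβ (s := 2) (by norm_num)
    simpa [Real.rpow_two] using this
  have hrw : (fun x : ℝ => (Real.toNNReal (gaussianPDFReal 0 v.toNNReal x) : ℝ≥0)
        • (A + B * x) ^ 2)
      = fun x : ℝ => ((Real.sqrt (2 * π * v))⁻¹ * A ^ 2) * Real.exp (-((2*v)⁻¹) * x ^ 2)
        + ((Real.sqrt (2 * π * v))⁻¹ * (2 * A * B)) * (x * Real.exp (-((2*v)⁻¹) * x ^ 2))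
        + ((Real.sqrt (2 * π * v))⁻¹ * B ^ 2) * (x ^ 2 * Real.exp (-((2*v)⁻¹) * x ^ 2)) := by
    ext x
    rw [smul_eq hv x]
    ring
  set k := (Real.sqrt (2 * π * v))⁻¹ with hk
  have j1 : Integrable (fun x : ℝ => k * A ^ 2 * Real.exp (-((2*v)⁻¹) * x ^ 2)
      + k * (2 * A * B) * (x * Real.exp (-((2*v)⁻¹) * x ^ 2))) volume :=
    (i0.const_mul _).add (i1.const_mul _)
  have j2 : Integrable (fun x : ℝ =>
      k * B ^ 2 * (x ^ 2 * Real.exp (-((2*v)⁻¹) * x ^ 2))) volume := i2.const_mul _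
  rw [hrw, integral_add j1 j2,
    integral_add (i0.const_mul (k * A ^ 2)) (i1.const_mul (k * (2 * A * B))),
    integral_const_mul, integral_const_mul, integral_const_mul,
    integral_gaussian, mom1 hβ, mom2 hβ]
  have hsq : Real.sqrt (π / (2*v)⁻¹) = Real.sqrt (2 * π * v) := by
    congr 1
    field_simp
  rw [hsq]
  have hpos : (0:ℝ) < Real.sqrt (2 * π * v) := Real.sqrt_pos.mpr (by positivity)
  have hone : k * Real.sqrt (2 * π * v) = 1 := inv_mul_cancel₀ hpos.ne'
  have hdiv : Real.sqrt (2*π*v) / (2 * (2*v)⁻¹) = Real.sqrt (2*π*v) * v := by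
    rw [div_eq_mul_inv]
    congr 1
    rw [mul_inv, inv_inv]
    field_simp
  rw [hdiv]
  linear_combination (A ^ 2 + B ^ 2 * v) * hone

lemma gauss_main (hv : 0 < v) (A B D : ℝ) :
    ∫ w, (1 + (A + B * w) ^ 2 / D) ∂(gaussianReal 0 v.toNNReal)
      = 1 + (A ^ 2 + B ^ 2 * v) / D := by
  have : IsProbabilityMeasure (gaussianReal 0 v.toNNReal) := by infer_instance
  rw [integral_add (integrable_const 1) ((gauss_integrable hv A B).div_const D),
    integral_div, gauss_int hv A B]
  simp

end gauss

/-- One-step stability estimate for the linear implicit Euler scheme for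
one-dimensional SDEs. The Brownian motion is encoded via its Gaussian marginals
`W_t ~ N(0,t)`; the time condition `t ∈ [0, 1/(2c)]` is expressed as
`0 ≤ t ∧ 2ct ≤ 1` (which for `c = 0` correctly means all `t ≥ 0`). -/
theorem stmt12 (c T : ℝ) (hc : 0 ≤ c) (hT : 0 < T)
    (a b σ : ℝ → ℝ) (ha : Measurable a) (hb : Measurable b) (hσ : Measurable σ)
    (h1 : ∀ x : ℝ, x * (a x * x + b x) + (1 / 2) * (σ x) ^ 2 ≤ c * (1 + x ^ 2))
    (h2 : ∀ x : ℝ, a x ≤ c)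
    (h3 : ∀ x : ℝ, (b x) ^ 2 ≤ c * (1 + x ^ 2))
    {Ω : Type*} [MeasurableSpace Ω] (P : Measure Ω) [IsProbabilityMeasure P]
    (W : ℝ → Ω → ℝ)
    (hW : ∀ t : ℝ, 0 ≤ t → Measure.map (W t) P = gaussianReal 0 (Real.toNNReal t)) :
    ∀ (t x : ℝ), 0 ≤ t → 2 * c * t ≤ 1 →
      ∫ ω, (1 + (x + b x * t + σ x * W t ω) ^ 2 / (1 - a x * t) ^ 2) ∂P
        ≤ (1 + x ^ 2) * Real.exp ((8 * c + 2) * t) := by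
  intro t x ht htc
  have hWt := hW t ht
  have haem : AEMeasurable (W t) P := by
    by_contra h
    rw [Measure.map_of_not_aemeasurable h] at hWt
    have h0 := congrArg (fun μ : Measure ℝ => μ univ) hWt
    simp at h0
  set A := x + b x * t with hA
  set B := σ x with hB
  set D := (1 - a x * t) ^ 2 with hD
  have hmap : ∫ ω, (1 + (x + b x * t + σ x * W t ω) ^ 2 / (1 - a x * t) ^ 2) ∂P
      = ∫ w, (1 + (A + B * w) ^ 2 / D) ∂(gaussianReal 0 (Real.toNNReal t)) := by
    rw [← hWt, integral_map haem]
    exact (continuous_const.add ((((continuous_const.add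
      (continuous_const.mul continuous_id)).pow 2)).div_const D)).aestronglyMeasurable
  rw [hmap]
  have hval : ∫ w, (1 + (A + B * w) ^ 2 / D) ∂(gaussianReal 0 (Real.toNNReal t))
      = 1 + (A ^ 2 + B ^ 2 * t) / D := by
    rcases eq_or_lt_of_le ht with h0 | h0
    · rw [← h0]
      simp only [Real.toNNReal_zero, gaussianReal_zero_var]
      rw [integral_dirac]
      norm_num
    · exact gauss_main h0 A B D
  rw [hval]
  -- now the deterministic inequality
  have h1x := h1 x
  have h2x := h2 x
  have h3x := h3 x
  have hct : c * t ≤ 1/2 := by linarith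
  have hat : a x * t ≤ c * t := mul_le_mul_of_nonneg_right h2x ht
  have hd : (1:ℝ)/2 ≤ 1 - a x * t := by linarith
  have hd2 : (1:ℝ)/4 ≤ (1 - a x * t) ^ 2 := by nlinarith [hd]
  have hd2pos : (0:ℝ) < (1 - a x * t) ^ 2 := lt_of_lt_of_le (by norm_num) hd2
  have e1 : 2*t*(x*(a x*x + b x) + (1/2)*(σ x)^2) ≤ 2*t*(c*(1+x^2)) :=
    mul_le_mul_of_nonneg_left h1x (by linarith)
  have e2 : t^2*(b x)^2 ≤ t^2*(c*(1+x^2)) := mul_le_mul_of_nonneg_left h3x (sq_nonneg t)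
  have key : (x + b x*t)^2 + (σ x)^2*t
      ≤ (x^2 + 4*((2*c*t + c*t^2)*(1+x^2))) * (1 - a x*t)^2 := by
    have s1 : (x + b x*t)^2 + (σ x)^2*t
        ≤ x^2*(1-2*(a x)*t) + (2*c*t + c*t^2)*(1+x^2) := by linarith [e1, e2]
    have s2 : x^2*(1-2*(a x)*t) ≤ x^2*(1 - a x*t)^2 := by linarith [sq_nonneg (x*(a x*t))]
    have hQ : (0:ℝ) ≤ (2*c*t + c*t^2)*(1+x^2) := by positivity
    have s3 : (2*c*t + c*t^2)*(1+x^2)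
        ≤ 4*((2*c*t + c*t^2)*(1+x^2))*(1 - a x*t)^2 := by
      linarith [mul_nonneg hQ (sub_nonneg.mpr hd2)]
    linarith [s1, s2, s3]
  have hdivle : ((x + b x*t)^2 + (σ x)^2*t)/(1 - a x*t)^2
      ≤ x^2 + 4*((2*c*t + c*t^2)*(1+x^2)) := by
    rw [div_le_iff₀ hd2pos]
    linarith [key]
  have hexp : 1 + (8*c+2)*t ≤ Real.exp ((8*c+2)*t) := by
    linarith [Real.add_one_le_exp ((8*c+2)*t)]
  have h4ct : 4*c*t^2 ≤ 2*t := by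
    have := mul_le_mul_of_nonneg_right htc (by linarith : (0:ℝ) ≤ 2*t)
    linarith
  have step1 : 1 + (A ^ 2 + B ^ 2 * t) / D ≤ 1 + x^2 + 4*((2*c*t + c*t^2)*(1+x^2)) := by
    rw [hA, hB, hD]
    have : (x + b x * t) ^ 2 + (σ x) ^ 2 * t = ((x + b x*t)^2 + (σ x)^2*t) := by ring
    linarith [hdivle]
  have step2 : 1 + x^2 + 4*((2*c*t + c*t^2)*(1+x^2)) ≤ (1+x^2)*(1+(8*c+2)*t) := by
    linarith [mul_nonneg (sq_nonneg x) (sub_nonneg.mpr h4ct)]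
  have step3 : (1+x^2)*(1+(8*c+2)*t) ≤ (1+x^2)*Real.exp ((8*c+2)*t) :=
    mul_le_mul_of_nonneg_left hexp (by positivity)
  linarith [step1, step2, step3]
end

section
/- Let d ∈ ℕ, T ∈ (0,∞), c, κ ∈ [0,∞), θ ∈ (0,T], let μ : ℝ^d → ℝ^d satisfy ⟨x, μ(x)⟩ ≤ c(1 + ‖x‖²) and ‖μ(x) - μ(y)‖ ≤ c(1 + ‖x‖^κ + ‖y‖^κ)‖x - y‖ for all x, y ∈ ℝ^d, let σ : ℝ^d → ℝ^{d×m} be any function, and suppose φ : ℝ^d × [0,θ] × ℝ^m → ℝ^d satisfies the implicit relation φ(x,t,y) = μ(x + φ(x,t,y))·t + σ(x)·y for all (x,t,y). Then for all (x,t,y) with c·t < 1/2 it holds that ‖x + φ(x,t,y)‖² ≤ ( ‖x‖² + ‖σ(x)‖²_{L(ℝ^m,ℝ^d)} ‖y‖² + cT ) / ( 1 - c t - 1/2 ). -/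
/-- A priori bound for the one-step map of the fully drift-implicit Euler scheme:
if `φ(x,t,y) = μ(x + φ(x,t,y))·t + σ(x)·y` on `ℝ^d × [0,θ] × ℝ^m`, then for
`c·t < 1/2` it holds that
`‖x + φ(x,t,y)‖² ≤ (‖x‖² + ‖σ(x)‖²‖y‖² + cT) / (1 - ct - 1/2)`. -/
theorem stmt17 {d m : ℕ} (T θ c κ : ℝ) (hT : 0 < T) (hθ : 0 < θ) (hθT : θ ≤ T)
    (hc : 0 ≤ c) (hκ : 0 ≤ κ)
    (μ : EuclideanSpace ℝ (Fin d) → EuclideanSpace ℝ (Fin d))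
    (hμ1 : ∀ x, (inner ℝ x (μ x) : ℝ) ≤ c * (1 + ‖x‖ ^ 2))
    (hμ2 : ∀ x y, ‖μ x - μ y‖ ≤ c * (1 + ‖x‖ ^ κ + ‖y‖ ^ κ) * ‖x - y‖)
    (σ : EuclideanSpace ℝ (Fin d) → EuclideanSpace ℝ (Fin m) →L[ℝ] EuclideanSpace ℝ (Fin d))
    (φ : EuclideanSpace ℝ (Fin d) → ℝ → EuclideanSpace ℝ (Fin m) → EuclideanSpace ℝ (Fin d))
    (hφ : ∀ x, ∀ t ∈ Set.Icc (0 : ℝ) θ, ∀ y, φ x t y = t • μ (x + φ x t y) + σ x y) :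
    ∀ x, ∀ t ∈ Set.Icc (0 : ℝ) θ, ∀ y, c * t < 1 / 2 →
      ‖x + φ x t y‖ ^ 2
        ≤ (‖x‖ ^ 2 + ‖σ x‖ ^ 2 * ‖y‖ ^ 2 + c * T) / (1 - c * t - 1 / 2) := by
  intro x t ht y hct
  obtain ⟨ht0, htθ⟩ := ht
  set z := x + φ x t y with hz
  have hφz : φ x t y = t • μ z + σ x y := by rw [hz]; exact hφ x t ⟨ht0, htθ⟩ y
  have hzeq : z = (x + σ x y) + t • μ z := by
    conv_lhs => rw [hz, hφz]
    module
  have h1 : ‖z‖ ^ 2 = inner ℝ z (x + σ x y) + t * (inner ℝ z (μ z) : ℝ) := by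
    rw [← real_inner_self_eq_norm_sq]
    nth_rewrite 2 [hzeq]
    rw [inner_add_right, real_inner_smul_right]
  have h2 : (inner ℝ z (μ z) : ℝ) ≤ c * (1 + ‖z‖ ^ 2) := hμ1 z
  have h3 : (inner ℝ z (x + σ x y) : ℝ) ≤ ‖z‖ * ‖x + σ x y‖ := real_inner_le_norm _ _
  have h4 : ‖x + σ x y‖ ≤ ‖x‖ + ‖σ x‖ * ‖y‖ :=
    (norm_add_le _ _).trans (by gcongr; exact (σ x).le_opNorm y)
  have h5 : ‖z‖ * ‖x + σ x y‖ ≤ (1/2) * ‖z‖ ^ 2 + (1/2) * ‖x + σ x y‖ ^ 2 := by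
    nlinarith [sq_nonneg (‖z‖ - ‖x + σ x y‖)]
  have h6 : (1/2) * ‖x + σ x y‖ ^ 2 ≤ ‖x‖ ^ 2 + ‖σ x‖ ^ 2 * ‖y‖ ^ 2 := by
    have h0 : (0:ℝ) ≤ ‖x + σ x y‖ := norm_nonneg _
    nlinarith [sq_nonneg (‖x‖ - ‖σ x‖ * ‖y‖), norm_nonneg x, norm_nonneg (σ x y)]
  have hpos : 0 < 1 - c * t - 1 / 2 := by linarith
  rw [le_div_iff₀ hpos]
  have hctT : c * t ≤ c * T := by
    have : t ≤ T := htθ.trans hθT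
    exact mul_le_mul_of_nonneg_left this hc
  nlinarith [sq_nonneg ‖z‖, mul_le_mul_of_nonneg_left h2 ht0]
end

section
/- Let α, β, γ, δ ∈ (0,∞) and define μ : ℝ² → ℝ² by μ(x₁,x₂) = (x₂, α(γ - x₁²)x₂ - δx₁) (the drift of the stochastic van der Pol oscillator). Then: (a) there exists c ∈ [0,∞) such that ⟨x, μ(x)⟩ ≤ c(1 + ‖x‖²) for all x ∈ ℝ²; but (b) there exists no c ∈ ℝ such that ⟨x - y, μ(x) - μ(y)⟩ ≤ c ‖x - y‖² for all x, y ∈ ℝ². -/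
lemma inner_two (x y : EuclideanSpace ℝ (Fin 2)) :
    (inner ℝ x y : ℝ) = x 0 * y 0 + x 1 * y 1 := by
  simp [PiLp.inner_apply, Fin.sum_univ_two, RCLike.inner_apply, mul_comm]

lemma normsq_two (x : EuclideanSpace ℝ (Fin 2)) :
    ‖x‖ ^ 2 = x 0 ^ 2 + x 1 ^ 2 := by
  rw [← real_inner_self_eq_norm_sq, inner_two]; ring

/-- The drift of the stochastic van der Pol oscillator satisfies a global
one-sided linear growth condition but is not globally one-sided Lipschitz
continuous. -/
theorem stmt18 (α β γ δ : ℝ) (hα : 0 < α) (hβ : 0 < β) (hγ : 0 < γ) (hδ : 0 < δ)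
    (μ : EuclideanSpace ℝ (Fin 2) → EuclideanSpace ℝ (Fin 2))
    (hμ : ∀ x : EuclideanSpace ℝ (Fin 2),
      μ x 0 = x 1 ∧ μ x 1 = α * (γ - (x 0) ^ 2) * x 1 - δ * x 0) :
    (∃ c : ℝ, 0 ≤ c ∧ ∀ x, (inner ℝ x (μ x) : ℝ) ≤ c * (1 + ‖x‖ ^ 2)) ∧
      ¬ ∃ c : ℝ, ∀ x y, (inner ℝ (x - y) (μ x - μ y) : ℝ) ≤ c * ‖x - y‖ ^ 2 := by
  constructor
  · refine ⟨(1 + δ) / 2 + α * γ, by positivity, fun x => ?_⟩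
    obtain ⟨h0, h1⟩ := hμ x
    rw [inner_two, normsq_two, h0, h1]
    have A : (1 - δ) * (x 0 * x 1) ≤ (1 + δ) / 2 * (x 0 ^ 2 + x 1 ^ 2) := by
      rcases le_total δ 1 with h | h
      · nlinarith [sq_nonneg (x 0 - x 1), sq_nonneg (x 0 + x 1)]
      · nlinarith [sq_nonneg (x 0 - x 1), sq_nonneg (x 0 + x 1)]
    nlinarith [A, mul_nonneg hα.le (sq_nonneg (x 0 * x 1)),
      mul_nonneg (mul_nonneg hα.le hγ.le) (sq_nonneg (x 0)),
      mul_nonneg (mul_nonneg hα.le hγ.le) (sq_nonneg (x 1)),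
      mul_pos hα hγ, sq_nonneg (x 0), sq_nonneg (x 1), hδ.le]
  · rintro ⟨c, hc⟩
    set u : ℝ := max 1 (Real.sqrt ((2 * c + 2) / α)) with hu
    have hu1 : (1 : ℝ) ≤ u := le_max_left _ _
    have hu2 : (2 * c + 2) / α ≤ u ^ 2 := by
      rcases le_or_gt ((2 * c + 2) / α) 0 with h | h
      · nlinarith
      · have hs : Real.sqrt ((2 * c + 2) / α) ≤ u := le_max_right _ _
        have hq := Real.sq_sqrt h.le
        nlinarith [Real.sqrt_nonneg ((2 * c + 2) / α)]
    have hau : 2 * c + 2 ≤ α * u ^ 2 := by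
      rw [div_le_iff₀ hα] at hu2; linarith
    set x : EuclideanSpace ℝ (Fin 2) := !₂[u, u] with hx
    set y : EuclideanSpace ℝ (Fin 2) := !₂[0, 2 * u] with hy
    obtain ⟨hx0, hx1⟩ := hμ x
    obtain ⟨hy0, hy1⟩ := hμ y
    have ex0 : x 0 = u := rfl
    have ex1 : x 1 = u := rfl
    have ey0 : y 0 = 0 := rfl
    have ey1 : y 1 = 2 * u := rfl
    have key := hc x y
    rw [inner_two, normsq_two] at key
    have s0 : (x - y) 0 = x 0 - y 0 := rfl
    have s1 : (x - y) 1 = x 1 - y 1 := rfl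
    have t0 : (μ x - μ y) 0 = μ x 0 - μ y 0 := rfl
    have t1 : (μ x - μ y) 1 = μ x 1 - μ y 1 := rfl
    rw [s0, s1, t0, t1, hx0, hx1, hy0, hy1, ex0, ex1, ey0, ey1] at key
    nlinarith [sq_nonneg u, mul_nonneg (mul_nonneg hα.le hγ.le) (sq_nonneg u),
      mul_nonneg hδ.le (sq_nonneg u), mul_le_mul_of_nonneg_right hau (sq_nonneg u)]
end
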